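/- arXiv:1808.02637 — 3 statements merged into one kernel-verified Lean document; each statement's English description precedes it below -/
import Mathlib

section
/- Let N be a finite set of UEs, and for each UE j let C_j ⊆ N be a finite set (its one-hop neighbors). Fix a UE n, a finite set C_{n,d} ⊆ N, and real numbers I_{m n} with 0 ≤ I_{m n} ≤ 1 for all m ∈ N. Define I_d(n,S) = Σ_{j ∈ C_{n,d}} (1 − ∏_{m ∈ C_j ∩ S} (1 − I_{m n})) for finite S ⊆ N. Then for every finite coalition S ⊆ N and every k ∈ S, the exclusive influence of k within S is at most the influence of k alone: I_d(n,S) − I_d(n, S \ {k}) ≤ I_d(n, {k}). -/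
/-- The `d`-influence of a coalition `S` on UE `n`:
`I_d(n,S) = Σ_{j ∈ C_{n,d}} (1 − ∏_{m ∈ C_j ∩ S} (1 − I_{m n}))`. -/
def dInfluence {α : Type*} [DecidableEq α] (Cnd : Finset α) (C : α → Finset α)
    (I : α → ℝ) (S : Finset α) : ℝ :=
  ∑ j ∈ Cnd, (1 - ∏ m ∈ C j ∩ S, (1 - I m))

/-- If the one-hop influence weights lie in `[0,1]`, the exclusive influence of
`k` within `S` is at most the influence of `k` alone:
`I_d(n,S) − I_d(n, S \ {k}) ≤ I_d(n, {k})`. -/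
theorem exclusive_influence_le_single {α : Type*} [DecidableEq α]
    (N : Finset α) (C : α → Finset α) (hC : ∀ j ∈ N, C j ⊆ N)
    (n : α) (hn : n ∈ N) (Cnd : Finset α) (hCnd : Cnd ⊆ N)
    (I : α → ℝ) (hI : ∀ m ∈ N, 0 ≤ I m ∧ I m ≤ 1)
    (S : Finset α) (hS : S ⊆ N) (k : α) (hk : k ∈ S) :
    dInfluence Cnd C I S - dInfluence Cnd C I (S \ {k}) ≤
      dInfluence Cnd C I ({k} : Finset α) := by
  unfold dInfluence
  rw [← Finset.sum_sub_distrib]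
  apply Finset.sum_le_sum
  intro j hj
  have hPmem : ∀ m ∈ C j ∩ (S \ {k}), 0 ≤ 1 - I m ∧ 1 - I m ≤ 1 := by
    intro m hm
    have hmN : m ∈ N := hS (Finset.mem_sdiff.mp (Finset.mem_inter.mp hm).2).1
    have := hI m hmN
    exact ⟨by linarith [this.2], by linarith [this.1]⟩
  have hP0 : 0 ≤ ∏ m ∈ C j ∩ (S \ {k}), (1 - I m) :=
    Finset.prod_nonneg fun m hm => (hPmem m hm).1
  have hP1 : ∏ m ∈ C j ∩ (S \ {k}), (1 - I m) ≤ 1 :=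
    Finset.prod_le_one (fun m hm => (hPmem m hm).1) (fun m hm => (hPmem m hm).2)
  by_cases hkj : k ∈ C j
  · have hins : C j ∩ S = insert k (C j ∩ (S \ {k})) := by
      ext m
      simp only [Finset.mem_inter, Finset.mem_insert, Finset.mem_sdiff,
        Finset.mem_singleton]
      constructor
      · rintro ⟨h1, h2⟩
        by_cases hm : m = k
        · exact Or.inl hm
        · exact Or.inr ⟨h1, h2, hm⟩
      · rintro (rfl | ⟨h1, h2, _⟩)
        · exact ⟨hkj, hk⟩
        · exact ⟨h1, h2⟩
    have hknot : k ∉ C j ∩ (S \ {k}) := by simp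
    have hksing : C j ∩ ({k} : Finset α) = {k} := by
      ext m; simp only [Finset.mem_inter, Finset.mem_singleton]
      exact ⟨fun h => h.2, fun h => ⟨h ▸ hkj, h⟩⟩
    rw [hins, hksing, Finset.prod_insert hknot, Finset.prod_singleton]
    have hIk := hI k (hS hk)
    nlinarith [hIk.1, hIk.2]
  · have heq : C j ∩ (S \ {k}) = C j ∩ S := by
      ext m
      simp only [Finset.mem_inter, Finset.mem_sdiff, Finset.mem_singleton]
      constructor
      · rintro ⟨h1, h2, _⟩; exact ⟨h1, h2⟩
      · rintro ⟨h1, h2⟩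
        exact ⟨h1, h2, fun hm => hkj (hm ▸ h1)⟩
    have hempty : C j ∩ ({k} : Finset α) = ∅ := by
      ext m; simp only [Finset.mem_inter, Finset.mem_singleton, Finset.notMem_empty,
        iff_false]
      rintro ⟨h1, rfl⟩; exact hkj h1
    rw [heq, hempty]
    simp
end

section
/- Let N be a finite set of players, let Cov : N → Finset N, and let α : N → ℝ. Define v(S) = Σ_{n ∈ N, S ∩ Cov(n) ≠ ∅} α_n for finite S ⊆ N, and define the Shapley value of player k as φ_k = Σ_{R ⊆ N \ {k}} ((|N| − |R| − 1)! · |R|! / |N|!) · (v(R ∪ {k}) − v(R)). Then for every k ∈ N, φ_k = Σ_{n ∈ N, k ∈ Cov(n)} α_n / |Cov(n)|. -/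
/-- The weighted coverage characteristic function
`v(S) = Σ_{n ∈ N, S ∩ Cov(n) ≠ ∅} α_n`. -/
def coverageValue {α : Type*} [DecidableEq α] (N : Finset α) (Cov : α → Finset α)
    (a : α → ℝ) (S : Finset α) : ℝ :=
  ∑ n ∈ N.filter (fun n => (S ∩ Cov n).Nonempty), a n

/-- The Shapley value of player `k` in the coalitional game `(N, v)`:
`φ_k = Σ_{R ⊆ N \ {k}} ((|N| − |R| − 1)! · |R|! / |N|!) · (v(R ∪ {k}) − v(R))`. -/
noncomputable def shapleyValue {α : Type*} [DecidableEq α] (N : Finset α)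
    (v : Finset α → ℝ) (k : α) : ℝ :=
  ∑ R ∈ (N \ {k}).powerset,
    (((N.card - R.card - 1).factorial * R.card.factorial : ℕ) : ℝ) /
        (N.card.factorial : ℝ) * (v (insert k R) - v R)


lemma key_tele (M n : ℕ) (h : n ≤ M) :
    ∑ r ∈ Finset.range (n+1), ((n.choose r : ℝ) * r.factorial * (M - r).factorial)
      = ((M+1).factorial : ℝ) / ((M+1-n : ℕ) : ℝ) := by
  set g : ℕ → ℝ := fun r => if r ≤ n then
      ((n.factorial : ℝ) * ((M+1-r).factorial : ℝ)) /
        (((n-r).factorial : ℝ) * ((M+1-n : ℕ) : ℝ)) else 0 with hg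
  have hd : ((M+1-n : ℕ) : ℝ) ≠ 0 := by
    have : 0 < M + 1 - n := by omega
    positivity
  have hterm : ∀ r ∈ Finset.range (n+1),
      ((n.choose r : ℝ) * r.factorial * (M - r).factorial) = g r - g (r+1) := by
    intro r hr
    simp only [Finset.mem_range] at hr
    have hrn : r ≤ n := by omega
    have h1 : M + 1 - r = (M - r) + 1 := by omega
    have c3 : ((M + 1 - n : ℕ) : ℝ) = (M : ℝ) + 1 - n := by
      rw [Nat.cast_sub (by omega)]; push_cast; ring
    have f3 : ((M : ℝ) + 1 - (n:ℝ)) ≠ 0 := by rw [← c3]; exact hd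
    have fM : ((M - r).factorial : ℝ) ≠ 0 := by positivity
    rcases eq_or_lt_of_le hrn with rfl | hlt
    · simp only [hg, le_refl, if_pos, Nat.sub_self, Nat.factorial_zero,
        Nat.choose_self, if_neg (by omega : ¬ r + 1 ≤ r), h1, Nat.factorial_succ]
      have c1 : ((M - r + 1 : ℕ) : ℝ) = (M : ℝ) - r + 1 := by
        rw [Nat.cast_add, Nat.cast_sub (by omega : r ≤ M), Nat.cast_one]
      push_cast
      have f5 : (M:ℝ) - r + 1 ≠ 0 := by
        have : (r:ℝ) ≤ M := by exact_mod_cast h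
        linarith
      field_simp
      ring
    · have h3 : M + 1 - (r+1) = M - r := by omega
      have h4 : n - (r+1) = n - r - 1 := by omega
      have h2 : n - r = (n - r - 1) + 1 := by omega
      have hfac : ((n - r).factorial : ℝ) = ((n:ℝ) - r) * ((n - r - 1).factorial : ℝ) := by
        rw [h2, Nat.factorial_succ, ← h2, Nat.cast_mul, Nat.cast_sub hrn]
      simp only [hg, if_pos hrn, if_pos (by omega : r + 1 ≤ n), h3, h4]
      rw [Nat.cast_choose ℝ hrn, h1, Nat.factorial_succ, hfac]
      have c1 : ((M - r + 1 : ℕ) : ℝ) = (M : ℝ) - r + 1 := by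
        rw [Nat.cast_add, Nat.cast_sub (by omega : r ≤ M), Nat.cast_one]
      have f1 : ((n - r - 1).factorial : ℝ) ≠ 0 := by positivity
      have f2 : (r.factorial : ℝ) ≠ 0 := by positivity
      have f4 : ((n : ℝ) - r) ≠ 0 := by
        have : (r : ℝ) < n := by exact_mod_cast hlt
        linarith
      push_cast [c1, c3]
      field_simp
      ring
  rw [Finset.sum_congr rfl hterm, Finset.sum_range_sub' g (n+1)]
  simp only [hg, if_pos (Nat.zero_le n), if_neg (by omega : ¬ n + 1 ≤ n)]
  rw [Nat.sub_zero, Nat.sub_zero]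
  have fn : (n.factorial : ℝ) ≠ 0 := by positivity
  field_simp
  ring

lemma powerset_weight_sum {α : Type*} [DecidableEq α] (D : Finset α) (m : ℕ)
    (hD : D.card < m) :
    ∑ R ∈ D.powerset,
        (((m - R.card - 1).factorial * R.card.factorial : ℕ) : ℝ) / (m.factorial : ℝ)
      = 1 / ((m - D.card : ℕ) : ℝ) := by
  rw [Finset.sum_powerset]
  have key : ∀ r ∈ Finset.range (D.card + 1),
      (∑ R ∈ D.powersetCard r,
        (((m - R.card - 1).factorial * R.card.factorial : ℕ) : ℝ) / (m.factorial : ℝ))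
      = ((D.card.choose r : ℝ) * r.factorial * ((m-1) - r).factorial) / (m.factorial : ℝ) := by
    intro r hr
    have hcard : ∀ R ∈ D.powersetCard r,
        (((m - R.card - 1).factorial * R.card.factorial : ℕ) : ℝ) / (m.factorial : ℝ)
        = (((m - r - 1).factorial * r.factorial : ℕ) : ℝ) / (m.factorial : ℝ) := by
      intro R hR
      rw [(Finset.mem_powersetCard.mp hR).2]
    rw [Finset.sum_congr rfl hcard, Finset.sum_const, Finset.card_powersetCard,
      nsmul_eq_mul, show m - r - 1 = (m-1) - r by omega]
    push_cast
    ring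
  rw [Finset.sum_congr rfl key, ← Finset.sum_div, key_tele (m-1) D.card (by omega),
    show (m-1)+1 = m by omega]
  have h1 : (m.factorial : ℝ) ≠ 0 := by positivity
  have h2 : ((m - D.card : ℕ) : ℝ) ≠ 0 := by
    have : 0 < m - D.card := by omega
    positivity
  field_simp

/-- Closed form of the Shapley value in the weighted coverage game:
for every `k ∈ N`, `φ_k = Σ_{n ∈ N, k ∈ Cov(n)} α_n / |Cov(n)|`. -/
theorem coverage_shapley_closed_form {α : Type*} [DecidableEq α]
    (N : Finset α) (Cov : α → Finset α) (hCov : ∀ n ∈ N, Cov n ⊆ N)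
    (a : α → ℝ) (k : α) (hk : k ∈ N) :
    shapleyValue N (coverageValue N Cov a) k =
      ∑ n ∈ N.filter (fun n => k ∈ Cov n), a n / ((Cov n).card : ℝ) := by
  classical
  set m := N.card with hm
  set w : Finset α → ℝ := fun R =>
    (((m - R.card - 1).factorial * R.card.factorial : ℕ) : ℝ) / (m.factorial : ℝ) with hw
  -- Step 1: marginal contribution
  have hmarg : ∀ R : Finset α,
      coverageValue N Cov a (insert k R) - coverageValue N Cov a R
        = ∑ n ∈ N, (if k ∈ Cov n ∧ ¬ (R ∩ Cov n).Nonempty then a n else 0) := by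
    intro R
    unfold coverageValue
    rw [Finset.sum_filter, Finset.sum_filter, ← Finset.sum_sub_distrib]
    refine Finset.sum_congr rfl fun n hn => ?_
    by_cases hkc : k ∈ Cov n
    · have h1 : ((insert k R) ∩ Cov n).Nonempty := ⟨k, by simp [hkc]⟩
      by_cases h2 : (R ∩ Cov n).Nonempty
      · simp [h1, h2, hkc]
      · simp [h1, h2, hkc]
    · have h1 : (insert k R) ∩ Cov n = R ∩ Cov n := by
        rw [Finset.insert_inter_of_notMem hkc]
      simp [h1, hkc]
  -- Step 2: rewrite Shapley value and swap sums
  unfold shapleyValue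
  calc
    ∑ R ∈ (N \ {k}).powerset, w R * (coverageValue N Cov a (insert k R) - coverageValue N Cov a R)
        = ∑ R ∈ (N \ {k}).powerset, ∑ n ∈ N,
            (if k ∈ Cov n ∧ ¬ (R ∩ Cov n).Nonempty then w R * a n else 0) := by
        refine Finset.sum_congr rfl fun R hR => ?_
        rw [hmarg R, Finset.mul_sum]
        exact Finset.sum_congr rfl fun n hn => by split <;> simp
    _ = ∑ n ∈ N, ∑ R ∈ (N \ {k}).powerset,
            (if k ∈ Cov n ∧ ¬ (R ∩ Cov n).Nonempty then w R * a n else 0) :=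
        Finset.sum_comm
    _ = ∑ n ∈ N, (if k ∈ Cov n then a n / ((Cov n).card : ℝ) else 0) := by
        refine Finset.sum_congr rfl fun n hn => ?_
        by_cases hkc : k ∈ Cov n
        · simp only [hkc, true_and, if_pos]
          have hsub : ((N \ {k}).powerset).filter (fun R => ¬ (R ∩ Cov n).Nonempty)
              = (N \ Cov n).powerset := by
            ext R
            simp only [Finset.mem_filter, Finset.mem_powerset, Finset.subset_sdiff,
              Finset.not_nonempty_iff_eq_empty, ← Finset.disjoint_iff_inter_eq_empty]
            constructor
            · rintro ⟨⟨hRN, -⟩, hdisj⟩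
              exact ⟨hRN, hdisj⟩
            · rintro ⟨hRN, hdisj⟩
              refine ⟨⟨hRN, ?_⟩, hdisj⟩
              simp only [Finset.disjoint_singleton_right]
              exact fun hkR => (Finset.disjoint_left.mp hdisj hkR) hkc
          rw [← Finset.sum_filter, hsub]
          have hc1 : 1 ≤ (Cov n).card := Finset.card_pos.mpr ⟨k, hkc⟩
          have hcm : (Cov n).card ≤ m := Finset.card_le_card (hCov n hn)
          have hDcard : (N \ Cov n).card = m - (Cov n).card :=
            Finset.card_sdiff_of_subset (hCov n hn)
          have hlt : (N \ Cov n).card < m := by omega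
          have hps := powerset_weight_sum (N \ Cov n) m hlt
          rw [hDcard, show m - (m - (Cov n).card) = (Cov n).card by omega] at hps
          rw [← Finset.sum_mul, hps]
          ring
        · simp only [hkc, false_and, if_false, if_neg hkc, Finset.sum_const_zero]
    _ = ∑ n ∈ N.filter (fun n => k ∈ Cov n), a n / ((Cov n).card : ℝ) :=
        (Finset.sum_filter _ _).symm
end

section
/- Let N be a finite set of UEs, and for each n ∈ N let C_{n,d} ⊆ N be a finite set with n ∉ C_{n,d} (the d-distance neighbors of n), and let α : N → ℝ. Define the characteristic function v(S) = Σ_{n ∈ N, S ∩ ({n} ∪ C_{n,d}) ≠ ∅} α_n for finite S ⊆ N, and the Shapley value of UE k as φ_k = Σ_{R ⊆ N \ {k}} ((|N| − |R| − 1)! · |R|! / |N|!) · (v(R ∪ {k}) − v(R)). Then for every k ∈ N, φ_k = Σ_{n ∈ N, k = n or k ∈ C_{n,d}} α_n / (1 + |C_{n,d}|). -/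
lemma step (s t r : ℕ) (h : r ≤ s) :
    s.choose r * r.factorial * (s - r + t + 1).factorial
      = (t+1) * (s.choose r * r.factorial * (s - r + t).factorial)
        + s.choose (r+1) * (r+1).factorial * (s - (r+1) + t + 1).factorial := by
  rcases h.lt_or_eq with h | rfl
  · obtain ⟨u, hu⟩ : ∃ u, s - r = u + 1 := ⟨s - r - 1, by omega⟩
    have h2 : s - (r+1) = u := by omega
    have hc : s.choose (r+1) * (r+1) = s.choose r * (s - r) := Nat.choose_succ_right_eq s r
    rw [hu] at hc
    rw [hu, h2]
    have h3 : s.choose (r+1) * (r+1).factorial = s.choose r * (u+1) * r.factorial := by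
      rw [Nat.factorial_succ, ← Nat.mul_assoc, hc]
    rw [h3]
    rw [show u + 1 + t + 1 = (u + t + 1) + 1 from by ring, Nat.factorial_succ,
        show u + 1 + t = u + t + 1 from by ring]
    ring
  · simp [Nat.choose_succ_self, Nat.factorial_succ]
    ring

lemma key (s t : ℕ) :
    ∑ r ∈ Finset.range (s+1), (t+1) * (s.choose r * r.factorial * (s - r + t).factorial)
      = (s + t + 1).factorial := by
  have H : ∀ j ≤ s + 1,
      (∑ r ∈ Finset.range j, (t+1) * (s.choose r * r.factorial * (s - r + t).factorial))
        + s.choose j * j.factorial * (s - j + t + 1).factorial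
      = (s + t + 1).factorial := by
    intro j hj
    induction j with
    | zero => simp
    | succ j ih =>
      rw [Finset.sum_range_succ]
      have hjs : j ≤ s := by omega
      have := step s t j hjs
      rw [add_assoc, ← this]
      exact ih (by omega)
  have := H (s+1) le_rfl
  simpa [Nat.choose_succ_self] using this

lemma coeff_sum {α : Type*} [DecidableEq α] (N T : Finset α) (hT : T ⊆ N) (hTne : T.Nonempty) :
    ∑ R ∈ (N \ T).powerset,
      (((N.card - R.card - 1).factorial * R.card.factorial : ℕ) : ℝ) / (N.card.factorial : ℝ)
      = 1 / (T.card : ℝ) := by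
  obtain ⟨t, ht⟩ : ∃ t, T.card = t + 1 := ⟨T.card - 1, by have := hTne.card_pos; omega⟩
  set s := (N \ T).card with hs
  have hscard : N.card = s + t + 1 := by
    rw [hs, Finset.card_sdiff_of_subset hT]; have := Finset.card_le_card hT; omega
  have hsum : ∑ R ∈ (N \ T).powerset,
      (((N.card - R.card - 1).factorial * R.card.factorial : ℕ) : ℝ) / (N.card.factorial : ℝ)
      = ∑ m ∈ Finset.range (s + 1), s.choose m •
        ((((N.card - m - 1).factorial * m.factorial : ℕ) : ℝ) / (N.card.factorial : ℝ)) :=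
    Finset.sum_powerset_apply_card
      (fun m => (((N.card - m - 1).factorial * m.factorial : ℕ) : ℝ) / (N.card.factorial : ℝ))
  rw [hsum]
  have hkey := key s t
  have hfact : (0:ℝ) < (N.card.factorial : ℝ) := by positivity
  have hterm : ∀ m ∈ Finset.range (s + 1),
      s.choose m • ((((N.card - m - 1).factorial * m.factorial : ℕ) : ℝ) / (N.card.factorial : ℝ))
      = ((s.choose m * ((s - m + t).factorial * m.factorial) : ℕ) : ℝ) / (N.card.factorial : ℝ) := by
    intro m hm
    have hm' : m ≤ s := by simpa [Nat.lt_succ_iff] using hm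
    have h1 : N.card - m - 1 = s - m + t := by omega
    rw [h1, nsmul_eq_mul]
    push_cast
    ring
  rw [Finset.sum_congr rfl hterm, ← Finset.sum_div]
  have hnat : (t + 1) * (∑ m ∈ Finset.range (s + 1),
      s.choose m * ((s - m + t).factorial * m.factorial)) = N.card.factorial := by
    rw [Finset.mul_sum, hscard]
    rw [← key s t]
    apply Finset.sum_congr rfl
    intro m _
    ring
  rw [eq_div_iff (by rw [ht]; positivity : ((T.card:ℝ)) ≠ 0), ht]
  rw [div_mul_eq_mul_div, div_eq_one_iff_eq (ne_of_gt hfact)]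
  push_cast [← hnat]
  ring



/-- Characteristic function of the distance-cutoff game: UE `n` is influenced by
coalition `S` exactly when `S ∩ ({n} ∪ C_{n,d}) ≠ ∅`, and
`v(S) = Σ_{n ∈ N, S ∩ ({n} ∪ C_{n,d}) ≠ ∅} α_n`. -/
def cutoffValue {α : Type*} [DecidableEq α] (N : Finset α) (Cnd : α → Finset α)
    (a : α → ℝ) (S : Finset α) : ℝ :=
  ∑ n ∈ N.filter (fun n => (S ∩ (insert n (Cnd n))).Nonempty), a n

/-- Theorem 1 with exact distance cutoff: if `n ∉ C_{n,d}` and `C_{n,d} ⊆ N`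
for every `n ∈ N`, then for every `k ∈ N`,
`φ_k = Σ_{n ∈ N, k = n ∨ k ∈ C_{n,d}} α_n / (1 + |C_{n,d}|)`. -/
theorem cutoff_shapley_closed_form {α : Type*} [DecidableEq α]
    (N : Finset α) (Cnd : α → Finset α)
    (hCnd : ∀ n ∈ N, Cnd n ⊆ N) (hnot : ∀ n ∈ N, n ∉ Cnd n)
    (a : α → ℝ) (k : α) (hk : k ∈ N) :
    shapleyValue N (cutoffValue N Cnd a) k =
      ∑ n ∈ N.filter (fun n => k = n ∨ k ∈ Cnd n),
        a n / (1 + ((Cnd n).card : ℝ)) := by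
  classical
  set T : α → Finset α := fun n => insert n (Cnd n) with hT
  set coeff : Finset α → ℝ := fun R =>
    (((N.card - R.card - 1).factorial * R.card.factorial : ℕ) : ℝ) / (N.card.factorial : ℝ)
    with hcoeff
  -- marginal contribution
  have hmarg : ∀ R ∈ (N \ {k}).powerset,
      cutoffValue N Cnd a (insert k R) - cutoffValue N Cnd a R
        = ∑ n ∈ N, (if k ∈ T n ∧ R ∩ T n = ∅ then a n else 0) := by
    intro R hR
    rw [Finset.mem_powerset] at hR
    have hkR : k ∉ R := fun h => (Finset.mem_sdiff.1 (hR h)).2 (Finset.mem_singleton_self k)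
    unfold cutoffValue
    rw [Finset.sum_filter, Finset.sum_filter, ← Finset.sum_sub_distrib]
    apply Finset.sum_congr rfl
    intro n _
    by_cases hkT : k ∈ T n
    · have h1 : ((insert k R) ∩ T n).Nonempty := ⟨k, Finset.mem_inter.2 ⟨Finset.mem_insert_self _ _, hkT⟩⟩
      rw [if_pos h1]
      by_cases h2 : (R ∩ T n) = ∅
      · simp +zetaDelta [h2, hkT, Finset.not_nonempty_iff_eq_empty.2 h2]
      · simp +zetaDelta [h2, hkT, Finset.nonempty_iff_ne_empty.2 h2]
    · have h1 : (insert k R) ∩ T n = R ∩ T n := Finset.insert_inter_of_notMem hkT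
      simp +zetaDelta [h1, hkT]
  rw [shapleyValue, Finset.sum_congr rfl (fun R hR => by rw [hmarg R hR])]
  rw [Finset.sum_congr rfl (fun R _ => Finset.mul_sum _ _ _), Finset.sum_comm]
  rw [Finset.sum_filter]
  apply Finset.sum_congr rfl
  intro n hn
  by_cases hkT : k ∈ T n
  · have hkcond : k = n ∨ k ∈ Cnd n := by
      rcases Finset.mem_insert.1 hkT with h | h
      · exact Or.inl h
      · exact Or.inr h
    rw [if_pos hkcond]
    have hTN : T n ⊆ N := Finset.insert_subset hn (hCnd n hn)
    have hset : (N \ {k}).powerset.filter (fun R => R ∩ T n = ∅) = (N \ T n).powerset := by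
      ext R
      simp only [Finset.mem_filter, Finset.mem_powerset]
      constructor
      · rintro ⟨hR, hRT⟩
        intro x hx
        refine Finset.mem_sdiff.2 ⟨(Finset.mem_sdiff.1 (hR hx)).1, fun hxT => ?_⟩
        have : x ∈ R ∩ T n := Finset.mem_inter.2 ⟨hx, hxT⟩
        simp [hRT] at this
      · intro hR
        constructor
        · intro x hx
          have := Finset.mem_sdiff.1 (hR hx)
          exact Finset.mem_sdiff.2 ⟨this.1, fun hxk => this.2 ((Finset.mem_singleton.1 hxk) ▸ hkT)⟩
        · rw [Finset.eq_empty_iff_forall_notMem]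
          intro x hx
          have hx' := Finset.mem_inter.1 hx
          exact (Finset.mem_sdiff.1 (hR hx'.1)).2 hx'.2
    have hcalc : ∑ R ∈ (N \ {k}).powerset, coeff R * (if k ∈ T n ∧ R ∩ T n = ∅ then a n else 0)
        = ∑ R ∈ (N \ T n).powerset, coeff R * a n := by
      rw [← hset]
      rw [Finset.sum_filter]
      apply Finset.sum_congr rfl
      intro R _
      by_cases h : R ∩ T n = ∅ <;> simp [h, hkT]
    rw [hcalc, ← Finset.sum_mul, coeff_sum N (T n) hTN ⟨n, Finset.mem_insert_self _ _⟩]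
    have hcard : ((T n).card : ℝ) = 1 + (Cnd n).card := by
      rw [hT]; rw [Finset.card_insert_of_notMem (hnot n hn)]; push_cast; ring
    rw [hcard]
    ring
  · have hkcond : ¬(k = n ∨ k ∈ Cnd n) := fun h => hkT (Finset.mem_insert.2 h)
    rw [if_neg hkcond]
    apply Finset.sum_eq_zero
    intro R _
    simp [hkT]
end
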